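/- If P is a simple polygon on n vertices in which every pair of nonadjacent vertices is internally visible (equivalently, P has exactly n nonvisible pairs of vertices), then P is convex, i.e., the closure of the interior of P is a convex set. -/

import Mathlib

open Set

noncomputable section

/-- The Euclidean plane. -/
abbrev Plane : Type := EuclideanSpace ℝ (Fin 2)

/-- The `i`-th edge of the polygon with vertices `P 0, …, P (n-1)`:
the closed segment from `P i` to `P (i+1)` (indices mod `n`). -/
def polyEdge {n : ℕ} [NeZero n] (P : Fin n → Plane) (i : Fin n) : Set Plane :=
  segment ℝ (P i) (P (i + 1))

/-- The boundary of the polygon: the union of its edges. -/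
def polyBoundary {n : ℕ} [NeZero n] (P : Fin n → Plane) : Set Plane :=
  ⋃ i, polyEdge P i

/-- A simple polygon on `n ≥ 3` vertices: vertices are pairwise distinct and any
two distinct edges intersect only in common endpoints. -/
def IsSimplePolygon (n : ℕ) [NeZero n] (P : Fin n → Plane) : Prop :=
  3 ≤ n ∧ Function.Injective P ∧
    ∀ i j : Fin n, i ≠ j →
      polyEdge P i ∩ polyEdge P j ⊆
        (({P i, P (i + 1)} : Set Plane) ∩ ({P j, P (j + 1)} : Set Plane))

/-- The interior of the polygon: the union of the bounded connected components of
the complement of the boundary. -/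
def polyInterior {n : ℕ} [NeZero n] (P : Fin n → Plane) : Set Plane :=
  {x | x ∉ polyBoundary P ∧
    Bornology.IsBounded (connectedComponentIn (polyBoundary P)ᶜ x)}

/-- The exterior of the polygon: the unbounded connected component of
the complement of the boundary. -/
def polyExterior {n : ℕ} [NeZero n] (P : Fin n → Plane) : Set Plane :=
  {x | x ∉ polyBoundary P ∧
    ¬ Bornology.IsBounded (connectedComponentIn (polyBoundary P)ᶜ x)}

/-- Vertices `i` and `j` are internally visible: the open segment joining them is
contained in the interior of the polygon. -/
def Visible {n : ℕ} [NeZero n] (P : Fin n → Plane) (i j : Fin n) : Prop :=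
  openSegment ℝ (P i) (P j) ⊆ polyInterior P

/-- Vertex indices `i` and `j` are adjacent: `j ≡ i ± 1 (mod n)`. -/
def AdjacentIdx (n : ℕ) [NeZero n] (i j : Fin n) : Prop :=
  j = i + 1 ∨ i = j + 1

/-- A `k`-tuple of (distinct) vertices is critical if some straight segment contains
all of them and contains no point of the exterior of the polygon. -/
def CriticalTuple {n : ℕ} [NeZero n] (P : Fin n → Plane) {k : ℕ}
    (q : Fin k → Fin n) : Prop :=
  Function.Injective (fun m => P (q m)) ∧
    ∃ u v : Plane, (∀ m, P (q m) ∈ segment ℝ u v) ∧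
      segment ℝ u v ∩ polyExterior P = ∅

/-- A polygon is critical if it has a critical `k`-tuple for some `k ≥ 3`. -/
def IsCriticalPolygon {n : ℕ} [NeZero n] (P : Fin n → Plane) : Prop :=
  ∃ k : ℕ, 3 ≤ k ∧ ∃ q : Fin k → Fin n, CriticalTuple P q

/-- A polygon is convex if the closure of its interior is a convex set. -/
def IsConvexPolygon {n : ℕ} [NeZero n] (P : Fin n → Plane) : Prop :=
  Convex ℝ (closure (polyInterior P))

/-- A transformation of a polygon on the time interval `[a, d]`: each vertex moves
along a continuous orbit, and at each time the points form a simple polygon. -/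
def IsTransformation (n : ℕ) [NeZero n] (a d : ℝ) (F : ℝ → Fin n → Plane) : Prop :=
  a ≤ d ∧ (∀ i : Fin n, ContinuousOn (fun t => F t i) (Icc a d)) ∧
    ∀ t ∈ Icc a d, IsSimplePolygon n (F t)

/-- A transformation on `[a, d]` is visibility-preserving if visible pairs stay
visible as time increases. -/
def VisibilityPreserving (n : ℕ) [NeZero n] (a d : ℝ) (F : ℝ → Fin n → Plane) : Prop :=
  ∀ i j : Fin n, ∀ s t : ℝ, a ≤ s → s ≤ t → t ≤ d →
    Visible (F s) i j → Visible (F t) i j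

/-- A transformation on `[a, d]` is a single-vertex move if at most one orbit is
nonconstant. -/
def IsSingleVertexMoveOn (n : ℕ) [NeZero n] (a d : ℝ) (F : ℝ → Fin n → Plane) : Prop :=
  ∃ i : Fin n, ∀ j : Fin n, j ≠ i → ∀ t ∈ Icc a d, F t j = F a j

/-- `δ > 0` is a safe radius for `P` if every simple polygon `Q` whose vertices are
within distance `δ` of those of `P` has critical triples only at triples that are
already critical in `P`. -/
def SafeRadius {n : ℕ} [NeZero n] (P : Fin n → Plane) (δ : ℝ) : Prop :=
  0 < δ ∧ ∀ Q : Fin n → Plane, IsSimplePolygon n Q →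
    (∀ i : Fin n, dist (P i) (Q i) < δ) →
    ∀ q : Fin 3 → Fin n, CriticalTuple Q q → CriticalTuple P q
section AuxLemmas

open Bornology MeasureTheory Module

lemma aux_param_mem_segment (p₀ v : Plane) {a s b : ℝ} (has : a ≤ s) (hsb : s ≤ b) :
    s • v + p₀ ∈ segment ℝ (a • v + p₀) (b • v + p₀) := by
  set g : ℝ →ᵃ[ℝ] Plane := AffineMap.lineMap p₀ (v + p₀) with hgdef
  have hg : ∀ r : ℝ, g r = r • v + p₀ := by
    intro r
    simp [hgdef, AffineMap.lineMap_apply, vsub_eq_sub, vadd_eq_add, add_sub_cancel_right]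
  have hmem : s ∈ segment ℝ a b := by
    rw [segment_eq_Icc (has.trans hsb)]; exact ⟨has, hsb⟩
  have h2 : g s ∈ g '' segment ℝ a b := Set.mem_image_of_mem _ hmem
  rw [image_segment, hg a, hg b, hg s] at h2
  exact h2

lemma aux_param_inj {v : Plane} (hv : v ≠ 0) {p₀ : Plane} {s t : ℝ}
    (h : s • v + p₀ = t • v + p₀) : s = t := by
  have h1 : (s - t) • v = 0 := by
    rw [sub_smul, sub_eq_zero]
    exact add_right_cancel h
  rcases smul_eq_zero.1 h1 with h2 | h2
  · exact sub_eq_zero.1 h2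
  · exact absurd h2 hv

lemma aux_hull_collinear (S : Finset Plane) (hcol : Collinear ℝ (S : Set Plane))
    (hne : S.Nonempty) :
    ∃ p ∈ S, ∃ q ∈ S, convexHull ℝ (S : Set Plane) ⊆ segment ℝ p q := by
  obtain ⟨p₀, v, h⟩ := (collinear_iff_exists_forall_eq_smul_vadd (S : Set Plane)).1 hcol
  have h' : ∀ y ∈ S, ∃ r : ℝ, y = r • v + p₀ := fun y hy => by
    obtain ⟨r, hr⟩ := h y hy; exact ⟨r, by rwa [vadd_eq_add] at hr⟩
  choose! t ht using h'
  obtain ⟨p, hp, hpmin⟩ := S.exists_min_image t hne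
  obtain ⟨q, hq, hqmax⟩ := S.exists_max_image t hne
  refine ⟨p, hp, q, hq, convexHull_min ?_ (convex_segment _ _)⟩
  intro y hy
  rw [show y = t y • v + p₀ from ht y hy, show p = t p • v + p₀ from ht p hp,
    show q = t q • v + p₀ from ht q hq]
  exact aux_param_mem_segment p₀ v (hpmin y hy) (hqmax y hy)

end AuxLemmas
lemma aux_one_ne_zero {n : ℕ} [NeZero n] (hn : 3 ≤ n) : (1 : Fin n) ≠ 0 := by
  intro h
  rw [Fin.ext_iff, Fin.val_one', Fin.val_zero, Nat.mod_eq_of_lt (by omega)] at h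
  exact one_ne_zero h

lemma aux_not_collinear {n : ℕ} [NeZero n] {P : Fin n → Plane}
    (hP : IsSimplePolygon n P) : ¬ Collinear ℝ (Set.range P) := by
  obtain ⟨hn3, hinj, hsimp⟩ := hP
  intro hcol
  obtain ⟨p₀, v, h⟩ := (collinear_iff_exists_forall_eq_smul_vadd (Set.range P)).1 hcol
  have h' : ∀ i : Fin n, ∃ r : ℝ, P i = r • v + p₀ := fun i => by
    obtain ⟨r, hr⟩ := h (P i) (Set.mem_range_self i); exact ⟨r, by rwa [vadd_eq_add] at hr⟩
  choose t ht using h'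
  have h10 : (1 : Fin n) ≠ 0 := aux_one_ne_zero hn3
  have hv : v ≠ 0 := by
    intro hv0
    have hPP : P 0 = P 1 := by rw [ht 0, ht 1, hv0, smul_zero, smul_zero]
    exact h10 (hinj hPP).symm
  have tinj : Function.Injective t := fun i j hij => hinj (by rw [ht i, ht j, hij])
  obtain ⟨i₀, -, hmax⟩ := Finset.univ.exists_max_image t Finset.univ_nonempty
  set a := i₀ - 1 with ha
  have ha1 : a + 1 = i₀ := by rw [ha, sub_add_cancel]
  have hane : a ≠ i₀ := by
    intro hE
    rw [hE] at ha1
    exact h10 (add_left_cancel (b := (1 : Fin n)) (c := 0) (by rw [add_zero]; exact ha1))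
  have hbne : i₀ + 1 ≠ i₀ := fun hE =>
    h10 (add_left_cancel (b := (1 : Fin n)) (c := 0) (by rw [add_zero]; exact hE))
  have hta : t a < t i₀ :=
    lt_of_le_of_ne (hmax a (Finset.mem_univ a)) fun hE => hane (tinj hE)
  have htb : t (i₀ + 1) < t i₀ :=
    lt_of_le_of_ne (hmax _ (Finset.mem_univ _)) fun hE => hbne (tinj hE)
  set c := max (t a) (t (i₀ + 1)) with hc
  set s := (c + t i₀) / 2 with hs
  have hmaxlt : c < t i₀ := max_lt hta htb
  have hcs : c < s := by rw [hs]; linarith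
  have hst : s < t i₀ := by rw [hs]; linarith
  have hz1 : s • v + p₀ ∈ polyEdge P a := by
    rw [polyEdge, ha1, ht a, ht i₀]
    exact aux_param_mem_segment p₀ v ((le_max_left _ _).trans hcs.le) hst.le
  have hz2 : s • v + p₀ ∈ polyEdge P i₀ := by
    rw [polyEdge, ht i₀, ht (i₀ + 1), segment_symm]
    exact aux_param_mem_segment p₀ v ((le_max_right _ _).trans hcs.le) hst.le
  have hmem := hsimp a i₀ hane ⟨hz1, hz2⟩
  rcases hmem.1 with hE | hE
  · have h1 := aux_param_inj hv (hE.symm ▸ (ht a) : s • v + p₀ = t a • v + p₀)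
    have h2 : t a ≤ c := le_max_left _ _
    linarith
  · rw [ha1] at hE
    have h1 := aux_param_inj hv (hE.symm ▸ (ht i₀) : s • v + p₀ = t i₀ • v + p₀)
    linarith

lemma aux_boundary_closed {n : ℕ} [NeZero n] (P : Fin n → Plane) :
    IsClosed (polyBoundary P) := by
  apply isClosed_iUnion_of_finite
  intro i
  rw [polyEdge, ← convexHull_pair]
  exact ((Set.toFinite _).isCompact_convexHull ℝ).isClosed

lemma aux_interior_open {n : ℕ} [NeZero n] (P : Fin n → Plane) :
    IsOpen (polyInterior P) := by
  rw [isOpen_iff_mem_nhds]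
  intro x hx
  have hBo : IsOpen (polyBoundary P)ᶜ := (aux_boundary_closed P).isOpen_compl
  rw [mem_nhds_iff]
  refine ⟨connectedComponentIn (polyBoundary P)ᶜ x, ?_, hBo.connectedComponentIn,
    mem_connectedComponentIn hx.1⟩
  intro y hy
  refine ⟨connectedComponentIn_subset _ _ hy, ?_⟩
  rw [← connectedComponentIn_eq hy]
  exact hx.2
/-- If every pair of nonadjacent vertices of a simple polygon is
internally visible, then the polygon is convex. -/
theorem statement5 {n : ℕ} [NeZero n] (P : Fin n → Plane)
    (hP : IsSimplePolygon n P)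
    (hvis : ∀ i j : Fin n, i ≠ j → ¬ AdjacentIdx n i j → Visible P i j) :
    IsConvexPolygon P := by
  classical
  obtain ⟨hn3, hinj, hsimp⟩ := id hP
  set B := polyBoundary P with hB
  set K := convexHull ℝ (Set.range P) with hK
  have hKconv : Convex ℝ K := convex_convexHull ℝ _
  have hKcpt : IsCompact K := (Set.finite_range P).isCompact_convexHull ℝ
  have hKcl : IsClosed K := hKcpt.isClosed
  have hBsub : B ⊆ K := by
    refine Set.iUnion_subset fun i => ?_
    exact hKconv.segment_subset (subset_convexHull ℝ _ ⟨i, rfl⟩)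
      (subset_convexHull ℝ _ ⟨i + 1, rfl⟩)
  have hIntOpen : IsOpen (polyInterior P) := aux_interior_open P
  -- Step A : the polygon interior is contained in the hull K
  have hIntSub : polyInterior P ⊆ K := by
    intro x hx
    by_contra hxK
    obtain ⟨f, u, hfa, hux⟩ := geometric_hahn_banach_closed_point hKconv hKcl hxK
    set H : Set Plane := {y | u < f y} with hH
    have hHconv : Convex ℝ H := convex_halfSpace_gt (IsLinearMap.mk f.map_add f.map_smul) u
    have hHB : H ⊆ Bᶜ := fun y hy hyB => absurd (hfa y (hBsub hyB)) (not_lt.2 (le_of_lt hy))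
    have hsubC : H ⊆ connectedComponentIn Bᶜ x :=
      hHconv.isPreconnected.subset_connectedComponentIn hux hHB
    have hbd : Bornology.IsBounded H := hx.2.subset hsubC
    obtain ⟨C, hC⟩ := isBounded_iff_forall_norm_le.1 hbd
    have ha : f (P 0) < u := hfa _ (subset_convexHull ℝ _ ⟨0, rfl⟩)
    set w := x - P 0 with hw
    have hfw : 0 < f w := by rw [hw, map_sub]; linarith
    have hmem : ∀ m : ℕ, x + (m : ℝ) • w ∈ H := by
      intro m
      show u < f (x + (m : ℝ) • w)
      rw [map_add, map_smul, smul_eq_mul]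
      nlinarith [Nat.cast_nonneg (α := ℝ) m]
    have hwpos : 0 < ‖w‖ := by
      rw [norm_pos_iff]
      intro h0
      rw [h0, map_zero] at hfw
      exact lt_irrefl 0 hfw
    obtain ⟨m, hm⟩ := exists_nat_gt ((C + ‖x‖) / ‖w‖)
    have h1 : C + ‖x‖ < m * ‖w‖ := (div_lt_iff₀ hwpos).1 hm
    have h2 : ‖x + (m : ℝ) • w‖ ≤ C := hC _ (hmem m)
    have h3 : ‖(m : ℝ) • w‖ ≤ ‖x + (m : ℝ) • w‖ + ‖x‖ := by
      calc ‖(m : ℝ) • w‖ = ‖(x + (m : ℝ) • w) + (-x)‖ := by congr 1; abel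
        _ ≤ ‖x + (m : ℝ) • w‖ + ‖-x‖ := norm_add_le _ _
        _ = ‖x + (m : ℝ) • w‖ + ‖x‖ := by rw [norm_neg]
    rw [norm_smul, Real.norm_natCast] at h3
    linarith
  have hIntSubInt : polyInterior P ⊆ interior K := interior_maximal hIntSub hIntOpen
  -- the hull has nonempty interior
  have hspan : affineSpan ℝ (Set.range P) = ⊤ := by
    by_contra hne
    apply aux_not_collinear hP
    have hnonempty : ((affineSpan ℝ (Set.range P) : AffineSubspace ℝ Plane) : Set Plane).Nonempty :=
      ⟨P 0, subset_affineSpan ℝ _ ⟨0, rfl⟩⟩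
    have hdir : (affineSpan ℝ (Set.range P)).direction ≠ ⊤ := by
      intro hd
      exact hne ((AffineSubspace.direction_eq_top_iff_of_nonempty hnonempty).1 hd)
    rw [collinear_iff_finrank_le_one]
    have hlt : Module.finrank ℝ (vectorSpan ℝ (Set.range P)) < Module.finrank ℝ Plane := by
      rw [← direction_affineSpan]
      exact Submodule.finrank_lt hdir
    rw [finrank_euclideanSpace_fin] at hlt
    omega
  have hIntNe : (interior K).Nonempty := by
    rw [hKconv.interior_nonempty_iff_affineSpan_eq_top, hK, affineSpan_convexHull]
    exact hspan
  -- K is contained in the closure of its interior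
  have hKclosInt : K ⊆ closure (interior K) := by
    obtain ⟨x₀, hx₀⟩ := hIntNe
    intro y hy
    rcases eq_or_ne x₀ y with rfl | hney
    · exact subset_closure hx₀
    · have hseg : openSegment ℝ x₀ y ⊆ interior K :=
        hKconv.openSegment_interior_closure_subset_interior hx₀ (subset_closure hy)
      have hy2 : y ∈ closure (openSegment ℝ x₀ y) := by
        rw [closure_openSegment]
        exact right_mem_segment ℝ x₀ y
      exact closure_mono hseg hy2
  have hvert : ∀ i : Fin n, P i ∈ B := fun i => Set.mem_iUnion.2 ⟨i, left_mem_segment ℝ _ _⟩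
  -- the frontier of K is contained in the polygon boundary
  have hfr : frontier K ⊆ B := by
    intro x hxf
    have hxK : x ∈ K := hKcl.frontier_subset hxf
    have hxint : x ∉ interior K := hxf.2
    obtain ⟨f, hf⟩ := geometric_hahn_banach_open_point hKconv.interior isOpen_interior hxint
    have hfK : ∀ a ∈ K, f a ≤ f x := by
      intro a haK
      have h1 : interior K ⊆ f ⁻¹' Set.Iic (f x) := fun z hz => (hf z hz).le
      have h2 : IsClosed (f ⁻¹' Set.Iic (f x)) := isClosed_Iic.preimage f.continuous
      exact closure_minimal h1 h2 (hKclosInt haK)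
    set S : Finset Plane := Finset.univ.image P with hS
    have hSK : K = convexHull ℝ (S : Set Plane) := by
      rw [hK, hS]
      congr 1
      rw [Finset.coe_image, Finset.coe_univ, Set.image_univ]
    have hxK' := hxK
    rw [hSK, Finset.convexHull_eq] at hxK'
    obtain ⟨wgt, hw0, hw1, hcm⟩ := hxK'
    rw [Finset.centerMass_eq_of_sum_1 _ _ hw1] at hcm
    simp only [id] at hcm
    have hkey : ∀ y ∈ S, wgt y ≠ 0 → f y = f x := by
      intro y₀ hy₀ hwy₀
      by_contra hfy
      have hflt : f y₀ < f x :=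
        lt_of_le_of_ne (hfK y₀ (by rw [hSK]; exact subset_convexHull ℝ _ hy₀)) hfy
      have hwpos : 0 < wgt y₀ := lt_of_le_of_ne (hw0 y₀ hy₀) (Ne.symm hwy₀)
      have hsum : f x = ∑ y ∈ S, wgt y * f y := by
        rw [← hcm, map_sum]
        simp [smul_eq_mul]
      have hlt : ∑ y ∈ S, wgt y * f y < ∑ y ∈ S, wgt y * f x := by
        apply Finset.sum_lt_sum
        · intro y hy
          exact mul_le_mul_of_nonneg_left
            (hfK y (by rw [hSK]; exact subset_convexHull ℝ _ hy)) (hw0 y hy)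
        · exact ⟨y₀, hy₀, mul_lt_mul_of_pos_left hflt hwpos⟩
      rw [← Finset.sum_mul, hw1, one_mul, ← hsum] at hlt
      exact lt_irrefl _ hlt
    set T := S.filter (fun y => f y = f x) with hT
    have hTsubS : T ⊆ S := Finset.filter_subset _ _
    have hsumT : ∑ y ∈ T, wgt y = 1 := by
      rw [hT, Finset.sum_filter_of_ne hkey, hw1]
    have hcmT : ∑ y ∈ T, wgt y • y = x := by
      rw [hT, Finset.sum_filter_of_ne, hcm]
      intro y hy h0
      apply hkey y hy
      intro hw0'
      apply h0
      rw [hw0', zero_smul]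
    have hxT : x ∈ convexHull ℝ (T : Set Plane) := by
      have hmem := T.centerMass_mem_convexHull (fun y hy => hw0 y (hTsubS hy))
        (by rw [hsumT]; exact one_pos) (fun y hy => Finset.mem_coe.2 hy)
      rwa [Finset.centerMass_eq_of_sum_1 _ _ hsumT, hcmT] at hmem
    -- T is collinear
    have hTcol : Collinear ℝ (T : Set Plane) := by
      rw [collinear_iff_rank_le_one]
      have hle : vectorSpan ℝ (T : Set Plane) ≤ LinearMap.ker (f : Plane →ₗ[ℝ] ℝ) := by
        rw [vectorSpan_def]
        apply Submodule.span_le.2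
        rintro d ⟨y, hy, z, hz, rfl⟩
        have hy' : f y = f x := (Finset.mem_filter.1 (Finset.mem_coe.1 hy)).2
        have hz' : f z = f x := (Finset.mem_filter.1 (Finset.mem_coe.1 hz)).2
        simp [LinearMap.mem_ker, vsub_eq_sub, map_sub, hy', hz']
      obtain ⟨x₀, hx₀⟩ := hIntNe
      have hfne : f (x₀ - x) ≠ 0 := by
        rw [map_sub]
        exact sub_ne_zero.2 (ne_of_lt (hf x₀ hx₀))
      have hrange : LinearMap.range (f : Plane →ₗ[ℝ] ℝ) ≠ ⊥ := by
        intro hbot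
        have : f (x₀ - x) ∈ LinearMap.range (f : Plane →ₗ[ℝ] ℝ) := ⟨x₀ - x, rfl⟩
        rw [hbot, Submodule.mem_bot] at this
        exact hfne this
      have hrk : 1 ≤ Module.finrank ℝ (LinearMap.range (f : Plane →ₗ[ℝ] ℝ)) :=
        Submodule.one_le_finrank_iff.2 hrange
      have hadd := LinearMap.finrank_range_add_finrank_ker (f : Plane →ₗ[ℝ] ℝ)
      rw [finrank_euclideanSpace_fin] at hadd
      have hker : Module.finrank ℝ (LinearMap.ker (f : Plane →ₗ[ℝ] ℝ)) ≤ 1 := by omega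
      calc Module.rank ℝ (vectorSpan ℝ (T : Set Plane))
          ≤ Module.rank ℝ (LinearMap.ker (f : Plane →ₗ[ℝ] ℝ)) := Submodule.rank_mono hle
        _ = (Module.finrank ℝ (LinearMap.ker (f : Plane →ₗ[ℝ] ℝ)) : Cardinal) :=
            (Module.finrank_eq_rank ℝ _).symm
        _ ≤ (1 : ℕ) := by exact_mod_cast hker
        _ = 1 := by norm_num
    have hTne : T.Nonempty := by
      by_contra hemp
      rw [Finset.not_nonempty_iff_eq_empty] at hemp
      rw [hemp] at hxT
      simp at hxT
    obtain ⟨p, hp, q, hq, hseg⟩ := aux_hull_collinear T hTcol hTne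
    have hxpq : x ∈ segment ℝ p q := hseg hxT
    obtain ⟨i, -, hi⟩ := Finset.mem_image.1 (hTsubS hp)
    obtain ⟨j, -, hj⟩ := Finset.mem_image.1 (hTsubS hq)
    rw [← hi, ← hj] at hxpq
    by_cases hij : i = j
    · subst hij
      rw [segment_same] at hxpq
      rw [Set.mem_singleton_iff] at hxpq
      rw [hxpq]
      exact hvert i
    by_cases hadj : AdjacentIdx n i j
    · rcases hadj with h1 | h1
      · rw [h1] at hxpq
        exact Set.mem_iUnion.2 ⟨i, hxpq⟩
      · rw [h1, segment_symm] at hxpq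
        exact Set.mem_iUnion.2 ⟨j, hxpq⟩
    · rw [← insert_endpoints_openSegment] at hxpq
      rcases Set.mem_insert_iff.1 hxpq with h1 | h1
      · rw [h1]; exact hvert i
      rcases Set.mem_insert_iff.1 h1 with h2 | h2
      · rw [h2]; exact hvert j
      · exact absurd (hIntSubInt (hvis i j hij hadj h2)) hxint
  -- every non-boundary point of the interior of K is in the polygon interior
  have hIntK : interior K \ B ⊆ polyInterior P := by
    rintro x ⟨hxi, hxB⟩
    refine ⟨hxB, ?_⟩
    set C := connectedComponentIn Bᶜ x with hC
    have hCpre : IsPreconnected C := isPreconnected_connectedComponentIn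
    have hCsub : C ⊆ Bᶜ := connectedComponentIn_subset _ _
    have hCcover : C ⊆ interior K ∪ Kᶜ := by
      intro y hy
      by_cases hyK : y ∈ K
      · left
        by_contra hyint
        exact hCsub hy (hfr ⟨subset_closure hyK, hyint⟩)
      · right; exact hyK
    by_contra hnb
    have hCK : (C ∩ Kᶜ).Nonempty := by
      by_contra hE
      rw [Set.not_nonempty_iff_eq_empty] at hE
      have hCint : C ⊆ interior K := fun y hy =>
        (hCcover hy).resolve_right fun h => Set.eq_empty_iff_forall_notMem.1 hE y ⟨hy, h⟩
      exact hnb (hKcpt.isBounded.subset (hCint.trans interior_subset))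
    have hCint : (C ∩ interior K).Nonempty := ⟨x, mem_connectedComponentIn hxB, hxi⟩
    obtain ⟨y, hyC, hyu, hyv⟩ := hCpre _ _ isOpen_interior hKcl.isOpen_compl hCcover hCint hCK
    exact hyv (interior_subset hyu)
  -- the boundary is a null set
  have hBnull : MeasureTheory.volume B = 0 := by
    rw [hB, polyBoundary]
    apply MeasureTheory.measure_iUnion_null
    intro i
    apply MeasureTheory.measure_mono_null
      (?_ : polyEdge P i ⊆ (affineSpan ℝ ({P i, P (i + 1)} : Set Plane) : Set Plane))
    · apply MeasureTheory.Measure.addHaar_affineSubspace MeasureTheory.volume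
      intro hE
      have h1 : Module.finrank ℝ (vectorSpan ℝ ({P i, P (i + 1)} : Set Plane)) ≤ 1 :=
        (collinear_pair ℝ _ _).finrank_le_one
      have h2 : (affineSpan ℝ ({P i, P (i + 1)} : Set Plane)).direction = ⊤ := by
        rw [hE]; exact AffineSubspace.direction_top ℝ _ _
      rw [← direction_affineSpan (k := ℝ), h2, finrank_top, finrank_euclideanSpace_fin] at h1
      omega
    · rw [polyEdge, ← convexHull_pair]
      exact convexHull_subset_affineSpan _
  -- the interior of K is contained in the closure of the polygon interior
  have hIntClos : interior K ⊆ closure (polyInterior P) := by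
    intro x hx
    rw [mem_closure_iff]
    intro o ho hxo
    have hpos : 0 < MeasureTheory.volume (o ∩ interior K) :=
      (ho.inter isOpen_interior).measure_pos MeasureTheory.volume ⟨x, hxo, hx⟩
    have hnotsub : ¬ (o ∩ interior K ⊆ B) := by
      intro h
      rw [MeasureTheory.measure_mono_null h hBnull] at hpos
      exact lt_irrefl 0 hpos
    obtain ⟨y, hy, hyB⟩ := Set.not_subset.1 hnotsub
    exact ⟨y, hy.1, hIntK ⟨hy.2, hyB⟩⟩
  -- conclusion
  have heq : closure (polyInterior P) = K := by
    apply Set.Subset.antisymm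
    · exact closure_minimal hIntSub hKcl
    · intro y hy
      have h1 : closure (interior K) ⊆ closure (polyInterior P) := by
        rw [← closure_closure (s := polyInterior P)]
        exact closure_mono hIntClos
      exact h1 (hKclosInt hy)
  rw [IsConvexPolygon, heq]
  exact hKconv
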